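/- Let α, β be complex numbers with αβ = 1. Define λ₁ = α + β, λ₂ = α² + 1 + β², λ₃ = α³ + α + β + β³, λ₄ = α⁴ + α² + 1 + β² + β⁴, and μ = 3 + 3α² + 2α⁴ + α⁶ + 3β² + 2β⁴ + β⁶. Then (λ₃ + 2λ₁)² = 5 + 8λ₂ + 4λ₄ + μ. -/
import Mathlib


theorem triple_product_coeff_sq_decomposition (α β : ℂ) (h : α * β = 1)
    (lam1 lam2 lam3 lam4 mu : ℂ)
    (h1 : lam1 = α + β)
    (h2 : lam2 = α ^ 2 + 1 + β ^ 2)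
    (h3 : lam3 = α ^ 3 + α + β + β ^ 3)
    (h4 : lam4 = α ^ 4 + α ^ 2 + 1 + β ^ 2 + β ^ 4)
    (hmu : mu = 3 + 3 * α ^ 2 + 2 * α ^ 4 + α ^ 6 + 3 * β ^ 2 + 2 * β ^ 4 + β ^ 6) :
    (lam3 + 2 * lam1) ^ 2 = 5 + 8 * lam2 + 4 * lam4 + mu := by subst h1 h2 h3 h4 hmu; linear_combination (6*α^2+2*α^2*β^2+20+6*β^2+2*α*β) * h
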